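/- Let (Δ_l)_{l≥1} be square-integrable real random variables on a probability space, and suppose there exists c < ∞ such that E[Δ_l²] ≤ c·2^{−l} for all l ≥ 1. Let β ∈ (0,1) and let L be a random level, independent of (Δ_l)_{l≥1}, with P(L = l) = (2^β − 1)·2^{−βl} for l ∈ {1,2,…}. Then Σ_{l≥1} E[Δ_l²]/P(L = l) ≤ c(2^β − 1)^{−1} Σ_{l≥1} 2^{(β−1)l} < ∞; consequently the estimator Z := Δ_L / P(L = L) satisfies E[Z²] < ∞ and E[Z] = Σ_{l≥1} E[Δ_l]. (This is the combination of the increment bound and the choice ℙ_L(l) ∝ 2^{−βl}, β ∈ (0,1), completing the proof of Proposition 1.) -/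

import Mathlib

open MeasureTheory ProbabilityTheory

/-- **Geometric level distribution completes the proof of Proposition 1.** Let `(Δ_l)_{l ≥ 1}` be
square-integrable real random variables with `E[Δ_l²] ≤ c 2^{-l}`, and let `L` be a random level,
independent of `(Δ_l)_{l ≥ 1}`, with `P(L = l) = (2^β - 1) 2^{-βl}` for `l ∈ {1, 2, …}`, where
`β ∈ (0,1)`. Then `∑_l E[Δ_l²]/P(L = l) ≤ c (2^β - 1)⁻¹ ∑_l 2^{(β-1)l} < ∞`; consequently the
estimator `Z := Δ_L / P(L = L)` has `E[Z²] < ∞` and `E[Z] = ∑_l E[Δ_l]`. -/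
theorem geometric_level_distribution_estimator
    {Ω : Type*} [MeasurableSpace Ω] (μ : Measure Ω) [IsProbabilityMeasure μ]
    (Δ : ℕ+ → Ω → ℝ)
    (hΔmeas : ∀ l, Measurable (Δ l))
    (hΔsq : ∀ l, Integrable (fun ω => (Δ l ω) ^ 2) μ)
    (c : ℝ)
    (hbd : ∀ l : ℕ+, ∫ ω, (Δ l ω) ^ 2 ∂μ ≤ c * ((2 : ℝ) ^ (l : ℕ))⁻¹)
    (β : ℝ) (hβ0 : 0 < β) (hβ1 : β < 1)
    (L : Ω → ℕ+)
    (hLmeas : ∀ l : ℕ+, MeasurableSet (L ⁻¹' {l}))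
    (p : ℕ+ → ℝ)
    (hp : ∀ l : ℕ+, p l = (μ (L ⁻¹' {l})).toReal)
    (hgeom : ∀ l : ℕ+, p l = ((2 : ℝ) ^ β - 1) * (2 : ℝ) ^ (-(β * ((l : ℕ) : ℝ))))
    -- L is independent of the σ-algebra generated by (Δ_l)_{l ≥ 1}
    (hindep : Indep (MeasurableSpace.comap L (⊤ : MeasurableSpace ℕ+))
      (⨆ l : ℕ+, MeasurableSpace.comap (Δ l) (inferInstance : MeasurableSpace ℝ)) μ) :
    -- ∑_l E[Δ_l²]/P(L = l) ≤ c (2^β - 1)⁻¹ ∑_l 2^{(β-1)l} < ∞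
    (Summable fun l : ℕ+ => (∫ ω, (Δ l ω) ^ 2 ∂μ) / p l) ∧
    (Summable fun l : ℕ+ => (2 : ℝ) ^ ((β - 1) * ((l : ℕ) : ℝ))) ∧
    (∑' l : ℕ+, (∫ ω, (Δ l ω) ^ 2 ∂μ) / p l)
      ≤ c * ((2 : ℝ) ^ β - 1)⁻¹ * ∑' l : ℕ+, (2 : ℝ) ^ ((β - 1) * ((l : ℕ) : ℝ)) ∧
    -- consequently E[Z²] < ∞ and E[Z] = ∑_l E[Δ_l]
    Integrable (fun ω => (Δ (L ω) ω / p (L ω)) ^ 2) μ ∧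
    Integrable (fun ω => Δ (L ω) ω / p (L ω)) μ ∧
    ∫ ω, Δ (L ω) ω / p (L ω) ∂μ = ∑' l : ℕ+, ∫ ω, Δ l ω ∂μ := by
  -- basic positivity facts
  have h2β : (1 : ℝ) < (2 : ℝ) ^ β :=
    (Real.one_lt_rpow_iff_of_pos (by norm_num)).mpr (Or.inl ⟨one_lt_two, hβ0⟩)
  have hpβ : (0 : ℝ) < (2 : ℝ) ^ β - 1 := by linarith
  have hppos : ∀ l : ℕ+, 0 < p l := by
    intro l; rw [hgeom l]; positivity
  -- geometric summability
  set r : ℝ := (2 : ℝ) ^ (β - 1) with hr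
  have hr0 : 0 < r := Real.rpow_pos_of_pos (by norm_num) _
  have hr1 : r < 1 := Real.rpow_lt_one_of_one_lt_of_neg one_lt_two (by linarith)
  have hgeo_eq : ∀ l : ℕ+, (2 : ℝ) ^ ((β - 1) * ((l : ℕ) : ℝ)) = r ^ (l : ℕ) := by
    intro l
    rw [hr, ← Real.rpow_natCast ((2:ℝ) ^ (β-1)) (l : ℕ), ← Real.rpow_mul (by norm_num)]
  have hsum2 : Summable fun l : ℕ+ => (2 : ℝ) ^ ((β - 1) * ((l : ℕ) : ℝ)) := by
    simp only [hgeo_eq]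
    exact (summable_geometric_of_lt_one hr0.le hr1).comp_injective (fun a b h => PNat.coe_injective h)
  -- termwise bound
  have key : ∀ l : ℕ+, (∫ ω, (Δ l ω) ^ 2 ∂μ) / p l
      ≤ c * ((2 : ℝ) ^ β - 1)⁻¹ * (2 : ℝ) ^ ((β - 1) * ((l : ℕ) : ℝ)) := by
    intro l
    have h1 : (∫ ω, (Δ l ω) ^ 2 ∂μ) / p l ≤ (c * ((2 : ℝ) ^ (l : ℕ))⁻¹) / p l := by
      gcongr
      · exact (hppos l).le
      · exact hbd l
    refine h1.trans (le_of_eq ?_)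
    have hβl : (2:ℝ) ^ (-(β*((l:ℕ):ℝ))) ≠ 0 := (Real.rpow_pos_of_pos two_pos _).ne'
    have hxy : (2:ℝ) ^ (-((l:ℕ):ℝ)) = 2 ^ ((β-1) * ((l:ℕ):ℝ)) * 2 ^ (-(β * ((l:ℕ):ℝ))) := by
      rw [← Real.rpow_add two_pos]; ring_nf
    rw [hgeom l, ← Real.rpow_natCast 2 (l : ℕ), ← Real.rpow_neg (by norm_num : (0:ℝ) ≤ 2), hxy]
    field_simp
  have hsum1 : Summable fun l : ℕ+ => (∫ ω, (Δ l ω) ^ 2 ∂μ) / p l := by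
    refine Summable.of_nonneg_of_le (fun l => div_nonneg (integral_nonneg fun ω => sq_nonneg _) (hppos l).le) key ?_
    exact hsum2.mul_left _
  have htsum : (∑' l : ℕ+, (∫ ω, (Δ l ω) ^ 2 ∂μ) / p l)
      ≤ c * ((2 : ℝ) ^ β - 1)⁻¹ * ∑' l : ℕ+, (2 : ℝ) ^ ((β - 1) * ((l : ℕ) : ℝ)) := by
    rw [← tsum_mul_left]
    exact Summable.tsum_le_tsum key hsum1 (hsum2.mul_left _)
  -- measurability of L and Z
  letI : MeasurableSpace ℕ+ := ⊤
  haveI : MeasurableSingletonClass ℕ+ := ⟨fun _ => trivial⟩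
  have hLm : Measurable L := measurable_to_countable' hLmeas
  have hZmeas : Measurable (fun ω => Δ (L ω) ω / p (L ω)) := by
    have h1 : Measurable (fun q : Ω × ℕ+ => Δ q.2 q.1 / p q.2) :=
      measurable_from_prod_countable_left (fun l => (hΔmeas l).div_const (p l))
    exact h1.comp (measurable_id.prodMk hLm)
  -- integrability of each Δ l
  have hΔint : ∀ l : ℕ+, Integrable (Δ l) μ := fun l =>
    memLp_one_iff_integrable.mp
      (((memLp_two_iff_integrable_sq (hΔmeas l).aestronglyMeasurable).mpr (hΔsq l)).mono_exponent
        (by norm_num))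
  -- generic independence of (g ∘ L) and (φ ∘ Δ l)
  have hIF : ∀ (l : ℕ+) (g : ℕ+ → ℝ) (φ : ℝ → ℝ), Measurable φ →
      IndepFun (g ∘ L) (φ ∘ Δ l) μ := by
    intro l g φ hφ
    rw [IndepFun_iff_Indep]
    refine indep_of_indep_of_le_right (indep_of_indep_of_le_left hindep ?_) ?_
    · rw [← MeasurableSpace.comap_comp]
      exact MeasurableSpace.comap_mono le_top
    · rw [← MeasurableSpace.comap_comp]
      exact le_trans (MeasurableSpace.comap_mono hφ.comap_le)
        (le_iSup (fun l => MeasurableSpace.comap (Δ l) inferInstance) l)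
  have he : ∀ l : ℕ+, ((fun k => if k = l then (1:ℝ) else 0) ∘ L)
      = (L ⁻¹' {l}).indicator (1 : Ω → ℝ) := by
    intro l
    funext ω
    by_cases h : L ω = l <;> simp [Set.indicator, h, Function.comp]
  -- key independence computation
  have hkey : ∀ (l : ℕ+) (φ : ℝ → ℝ), Measurable φ →
      ∫ ω in L ⁻¹' {l}, φ (Δ l ω) ∂μ = p l * ∫ ω, φ (Δ l ω) ∂μ := by
    intro l φ hφ
    have hif := hIF l (fun k => if k = l then (1:ℝ) else 0) φ hφ
    rw [he l] at hif
    have hmul := IndepFun.integral_mul_eq_mul_integral hif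
      ((measurable_one.indicator (hLmeas l)).aestronglyMeasurable)
      ((hφ.comp (hΔmeas l)).aestronglyMeasurable)
    have h1 : ((L ⁻¹' {l}).indicator (1 : Ω → ℝ)) * (φ ∘ Δ l)
        = (L ⁻¹' {l}).indicator (fun ω => φ (Δ l ω)) := by
      funext ω
      by_cases h : ω ∈ L ⁻¹' {l} <;> simp [Set.indicator, h]
    rw [h1] at hmul
    have h2 : integral μ ((L ⁻¹' {l}).indicator (1 : Ω → ℝ)) = p l := by
      rw [hp l]; exact integral_indicator_one (hLmeas l)
    rw [← integral_indicator (hLmeas l), hmul, h2]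
    rfl
  -- partition of Ω by level
  have hUnion : (⋃ l : ℕ+, L ⁻¹' {l}) = Set.univ := by
    ext ω; simp only [Set.mem_iUnion, Set.mem_preimage, Set.mem_singleton_iff, Set.mem_univ,
      iff_true]
    exact ⟨L ω, rfl⟩
  have hdisj : Pairwise (Function.onFun Disjoint fun l : ℕ+ => L ⁻¹' {l}) := by
    intro i j hij
    refine Set.disjoint_left.mpr fun ω hi hj => hij ?_
    simp only [Set.mem_preimage, Set.mem_singleton_iff] at hi hj
    rw [← hi, ← hj]
  -- set integral of the square on each piece
  have hsq_on : ∀ l : ℕ+, IntegrableOn (fun ω => (Δ l ω / p l) ^ 2) (L ⁻¹' {l}) μ := by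
    intro l
    have hfun : (fun ω => (Δ l ω / p l) ^ 2) = fun ω => (Δ l ω) ^ 2 * ((p l) ^ 2)⁻¹ := by
      funext ω; rw [div_pow, div_eq_mul_inv]
    rw [hfun]
    exact ((hΔsq l).mul_const _).integrableOn
  have hset_sq : ∀ l : ℕ+, ∫ ω in L ⁻¹' {l}, (Δ l ω / p l) ^ 2 ∂μ
      = (∫ ω, (Δ l ω) ^ 2 ∂μ) / p l := by
    intro l
    have hfun : (fun ω => (Δ l ω / p l) ^ 2) = fun ω => (Δ l ω) ^ 2 * ((p l) ^ 2)⁻¹ := by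
      funext ω; rw [div_pow, div_eq_mul_inv]
    have hk := hkey l (fun x => x ^ 2) (measurable_id.pow_const 2)
    simp only [hfun]
    rw [integral_mul_const, hk]
    have hne : p l ≠ 0 := (hppos l).ne'
    field_simp
  have hlin : ∀ l : ℕ+, ∫⁻ ω in L ⁻¹' {l}, ‖(Δ (L ω) ω / p (L ω)) ^ 2‖₊ ∂μ
      = ENNReal.ofReal ((∫ ω, (Δ l ω) ^ 2 ∂μ) / p l) := by
    intro l
    have hcong : ∫⁻ ω in L ⁻¹' {l}, (‖(Δ (L ω) ω / p (L ω)) ^ 2‖₊ : ENNReal) ∂μ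
        = ∫⁻ ω in L ⁻¹' {l}, ENNReal.ofReal ((Δ l ω / p l) ^ 2) ∂μ := by
      refine setLIntegral_congr_fun (hLmeas l) (fun ω hω => ?_)
      have hLl : L ω = l := hω
      rw [hLl]; exact Real.enorm_eq_ofReal (sq_nonneg _)
    rw [hcong, ← ofReal_integral_eq_lintegral_ofReal (hsq_on l)
      (ae_of_all _ fun ω => sq_nonneg _), hset_sq l]
  -- integrability of Z²
  have hZ2 : Integrable (fun ω => (Δ (L ω) ω / p (L ω)) ^ 2) μ := by
    refine ⟨(hZmeas.pow_const 2).aestronglyMeasurable, ?_⟩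
    have : (∫⁻ ω, ‖(Δ (L ω) ω / p (L ω)) ^ 2‖₊ ∂μ) < ⊤ := by
      calc ∫⁻ ω, ‖(Δ (L ω) ω / p (L ω)) ^ 2‖₊ ∂μ
          = ∫⁻ ω in ⋃ l : ℕ+, L ⁻¹' {l}, ‖(Δ (L ω) ω / p (L ω)) ^ 2‖₊ ∂μ := by
            rw [hUnion, Measure.restrict_univ]
        _ = ∑' l : ℕ+, ∫⁻ ω in L ⁻¹' {l}, ‖(Δ (L ω) ω / p (L ω)) ^ 2‖₊ ∂μ :=
            lintegral_iUnion hLmeas hdisj _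
        _ = ∑' l : ℕ+, ENNReal.ofReal ((∫ ω, (Δ l ω) ^ 2 ∂μ) / p l) := tsum_congr hlin
        _ = ENNReal.ofReal (∑' l : ℕ+, (∫ ω, (Δ l ω) ^ 2 ∂μ) / p l) :=
            (ENNReal.ofReal_tsum_of_nonneg
              (fun l => div_nonneg (integral_nonneg fun ω => sq_nonneg _) (hppos l).le)
              hsum1).symm
        _ < ⊤ := ENNReal.ofReal_lt_top
    exact this
  -- integrability of Z
  have hZ1 : Integrable (fun ω => Δ (L ω) ω / p (L ω)) μ :=
    memLp_one_iff_integrable.mp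
      (((memLp_two_iff_integrable_sq hZmeas.aestronglyMeasurable).mpr hZ2).mono_exponent
        (by norm_num))
  -- the unbiasedness identity
  have hset : ∀ l : ℕ+, ∫ ω in L ⁻¹' {l}, Δ (L ω) ω / p (L ω) ∂μ = ∫ ω, Δ l ω ∂μ := by
    intro l
    have h1 : ∫ ω in L ⁻¹' {l}, Δ (L ω) ω / p (L ω) ∂μ = ∫ ω in L ⁻¹' {l}, Δ l ω / p l ∂μ :=
      setIntegral_congr_fun (hLmeas l) (fun ω hω => by
        have hLl : L ω = l := hω
        rw [hLl])
    have hk := hkey l id measurable_id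
    simp only [id_eq] at hk
    rw [h1, integral_div, hk]
    have hne : p l ≠ 0 := (hppos l).ne'
    field_simp
  have hfinal : ∫ ω, Δ (L ω) ω / p (L ω) ∂μ = ∑' l : ℕ+, ∫ ω, Δ l ω ∂μ := by
    rw [← setIntegral_univ, ← hUnion,
      integral_iUnion hLmeas hdisj (hUnion ▸ hZ1.integrableOn)]
    exact tsum_congr hset
  exact ⟨hsum1, hsum2, htsum, hZ2, hZ1, hfinal⟩
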